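/- Let T be a bounded operator on a complex separable Hilbert space H belonging to B_1(𝔻), and let M be a closed subspace of H invariant under T, with M ≠ H, such that the spectrum of the restriction T|_M is disjoint from 𝔻. Then the compression P_{M⊥} T|_{M⊥} (equal to (T*|_{M⊥})*) belongs to B_1(𝔻). -/

import Mathlib

open ContinuousLinearMap Submodule

noncomputable section

/-- The Cowen–Douglas class `B_n(Ω)`. -/
def CowenDouglas {H : Type*} [NormedAddCommGroup H] [InnerProductSpace ℂ H]
    (T : H →L[ℂ] H) (Ω : Set ℂ) (n : ℕ) : Prop :=
  (∀ ω ∈ Ω, Function.Surjective (T - ω • (1 : H →L[ℂ] H)) ∧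
      Module.finrank ℂ (LinearMap.ker ((T - ω • (1 : H →L[ℂ] H)) : H →ₗ[ℂ] H)) = n) ∧
  (⨆ ω ∈ Ω, LinearMap.ker ((T - ω • (1 : H →L[ℂ] H)) : H →ₗ[ℂ] H)).topologicalClosure = ⊤

theorem stmt_16 {H : Type*} [NormedAddCommGroup H] [InnerProductSpace ℂ H]
    [CompleteSpace H] [TopologicalSpace.SeparableSpace H]
    (T : H →L[ℂ] H) (hT : CowenDouglas T (Metric.ball (0 : ℂ) 1) 1)
    (M : Submodule ℂ H) [CompleteSpace M] (hM : M ≠ ⊤)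
    (hinv : ∀ x ∈ M, T x ∈ M)
    (hspec : spectrum ℂ ((orthogonalProjection M).comp (T.comp M.subtypeL)) ∩
      Metric.ball (0 : ℂ) 1 = ∅) :
    CowenDouglas ((orthogonalProjection Mᗮ).comp (T.comp Mᗮ.subtypeL))
      (Metric.ball (0 : ℂ) 1) 1 := by
  classical
  set P : H →L[ℂ] Mᗮ := orthogonalProjection Mᗮ with hPdef
  set A : Mᗮ →L[ℂ] Mᗮ := (orthogonalProjection Mᗮ).comp (T.comp Mᗮ.subtypeL) with hAdef
  set B : M →L[ℂ] M := (orthogonalProjection M).comp (T.comp M.subtypeL) with hBdef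
  have hPv : ∀ v : Mᗮ, P (v : H) = v := fun v =>
    orthogonalProjection_mem_subspace_eq_self v
  have hPM : ∀ x : H, x ∈ M → P x = 0 := fun x hx =>
    Submodule.orthogonalProjectionOnto_apply_of_mem_orthogonal
      (Submodule.le_orthogonal_orthogonal M hx)
  have hdec : ∀ x : H, x - (P x : H) ∈ M := by
    intro x
    have h : (orthogonalProjection M x : H) + (orthogonalProjection Mᗮ x : H) = x :=
      M.starProjection_add_starProjection_orthogonal x
    have h2 : x - (P x : H) = ((orthogonalProjection M x : H)) := by
      rw [sub_eq_iff_eq_add]; exact h.symm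
    rw [h2]; exact (orthogonalProjection M x).2
  have hmemM : ∀ x : H, P x = 0 → x ∈ M := by
    intro x hx
    have := hdec x
    rwa [hx, Submodule.coe_zero, sub_zero] at this
  have hAP : ∀ x : H, A (P x) = P (T x) := by
    intro x
    have h1 : T x = T ((P x : H)) + T (x - (P x : H)) := by
      rw [← map_add]; congr 1; abel
    have h2 : P (T (x - (P x : H))) = 0 := hPM _ (hinv _ (hdec x))
    rw [hAdef]
    simp only [ContinuousLinearMap.comp_apply, Submodule.subtypeL_apply]
    rw [h1, map_add, h2, add_zero]
  have hkey : ∀ (ω : ℂ) (x : H),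
      (A - ω • (1 : Mᗮ →L[ℂ] Mᗮ)) (P x) = P ((T - ω • (1 : H →L[ℂ] H)) x) := by
    intro ω x
    simp only [ContinuousLinearMap.sub_apply, ContinuousLinearMap.smul_apply,
      ContinuousLinearMap.one_apply, map_sub, map_smul, hAP]
  have hmap : ∀ (ω : ℂ) (x : H), x ∈ LinearMap.ker ((T - ω • (1 : H →L[ℂ] H)) : H →ₗ[ℂ] H) →
      P x ∈ LinearMap.ker ((A - ω • (1 : Mᗮ →L[ℂ] Mᗮ)) : Mᗮ →ₗ[ℂ] Mᗮ) := by
    intro ω x hx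
    rw [LinearMap.mem_ker] at hx ⊢
    have hx' : (T - ω • (1 : H →L[ℂ] H)) x = 0 := hx
    show (A - ω • (1 : Mᗮ →L[ℂ] Mᗮ)) (P x) = 0
    rw [hkey, hx', map_zero]
  constructor
  · intro ω hω
    obtain ⟨hs, hk⟩ := hT.1 ω hω
    -- invertibility of ω - B
    have hω' : ω ∉ spectrum ℂ B := by
      intro h
      exact Set.eq_empty_iff_forall_notMem.mp hspec ω ⟨h, hω⟩
    have hu : IsUnit (algebraMap ℂ (M →L[ℂ] M) ω - B) := by
      rwa [spectrum.notMem_iff] at hω'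
    set e : M →L[ℂ] M := algebraMap ℂ (M →L[ℂ] M) ω - B with hedef
    obtain ⟨u, hu⟩ := hu
    have he : ∀ m : M, ((e m : H)) = ω • (m : H) - T (m : H) := by
      intro m
      have hTm : T (m : H) ∈ M := hinv _ m.2
      have : ((orthogonalProjection M (T (m : H)) : H)) = T (m : H) :=
        Submodule.starProjection_eq_self_iff.mpr hTm
      simp [hedef, hBdef, ContinuousLinearMap.sub_apply, Algebra.algebraMap_eq_smul_one,
        ContinuousLinearMap.smul_apply, ContinuousLinearMap.one_apply, this]
    have hinj : ∀ m : M, e m = 0 → m = 0 := by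
      intro m hm
      calc m = ((↑u⁻¹ * ↑u : M →L[ℂ] M)) m := by rw [u.inv_mul]; rfl
        _ = (↑u⁻¹ : M →L[ℂ] M) (e m) := by rw [hu]; rfl
        _ = 0 := by rw [hm, map_zero]
    have hesurj : ∀ n : M, ∃ m, e m = n := by
      intro n
      refine ⟨(↑u⁻¹ : M →L[ℂ] M) n, ?_⟩
      calc e ((↑u⁻¹ : M →L[ℂ] M) n) = ((↑u * ↑u⁻¹ : M →L[ℂ] M)) n := by rw [hu]; rfl
        _ = n := by rw [u.mul_inv]; rfl
    constructor
    · -- surjectivity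
      intro v
      obtain ⟨x, hx⟩ := hs (v : H)
      exact ⟨P x, by rw [hkey, hx, hPv]⟩
    · -- kernel dimension
      let φ : LinearMap.ker ((T - ω • (1 : H →L[ℂ] H)) : H →ₗ[ℂ] H) →ₗ[ℂ]
          LinearMap.ker ((A - ω • (1 : Mᗮ →L[ℂ] Mᗮ)) : Mᗮ →ₗ[ℂ] Mᗮ) :=
        LinearMap.codRestrict _
          ((P : H →ₗ[ℂ] Mᗮ) ∘ₗ (LinearMap.ker ((T - ω • (1 : H →L[ℂ] H)) : H →ₗ[ℂ] H)).subtype)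
          (fun x => hmap ω x.1 x.2)
      have hφ : ∀ x, ((φ x : Mᗮ)) = P (x : H) := fun x => rfl
      have hφinj : Function.Injective φ := by
        intro a b hab
        have h1 : P ((a : H) - (b : H)) = 0 := by
          rw [map_sub, ← hφ, ← hφ, hab, sub_self]
        have h2 : (a : H) - (b : H) ∈ M := hmemM _ h1
        have h3 : (T - ω • (1 : H →L[ℂ] H)) ((a : H) - (b : H)) = 0 := by
          rw [map_sub, (show (T - ω • (1 : H →L[ℂ] H)) (a : H) = 0 from a.2),
            (show (T - ω • (1 : H →L[ℂ] H)) (b : H) = 0 from b.2), sub_self]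
        have h4 : e ⟨(a : H) - (b : H), h2⟩ = 0 := by
          apply Subtype.ext
          rw [he, Submodule.coe_zero]
          have : T ((a : H) - (b : H)) - ω • ((a : H) - (b : H)) = 0 := by
            simpa [ContinuousLinearMap.sub_apply, ContinuousLinearMap.smul_apply,
              ContinuousLinearMap.one_apply] using h3
          have h5 : T ((a : H) - (b : H)) = ω • ((a : H) - (b : H)) := by
            rwa [sub_eq_zero] at this
          simp [h5]
        have := hinj _ h4
        have h6 : (a : H) - (b : H) = 0 := congrArg Subtype.val this
        exact Subtype.ext (by rwa [sub_eq_zero] at h6)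
      have hφsurj : Function.Surjective φ := by
        intro v
        have h0 : P ((T - ω • (1 : H →L[ℂ] H)) ((v : Mᗮ) : H)) = 0 := by
          rw [← hkey, hPv, (show (A - ω • (1 : Mᗮ →L[ℂ] Mᗮ)) (v : Mᗮ) = 0 from v.2)]
        have hSM : (T - ω • (1 : H →L[ℂ] H)) ((v : Mᗮ) : H) ∈ M := hmemM _ h0
        obtain ⟨w, hw⟩ := hesurj ⟨_, hSM⟩
        have hwH : ω • (w : H) - T (w : H) =
            (T - ω • (1 : H →L[ℂ] H)) ((v : Mᗮ) : H) := by
          rw [← he, hw]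
        have hxker : (T - ω • (1 : H →L[ℂ] H)) ((w : H) + ((v : Mᗮ) : H)) = 0 := by
          rw [map_add]
          have : (T - ω • (1 : H →L[ℂ] H)) (w : H) = -(ω • (w : H) - T (w : H)) := by
            simp [ContinuousLinearMap.sub_apply, ContinuousLinearMap.smul_apply,
              ContinuousLinearMap.one_apply]
          rw [this, hwH, neg_add_cancel]
        refine ⟨⟨(w : H) + ((v : Mᗮ) : H), hxker⟩, ?_⟩
        apply Subtype.ext
        rw [hφ]
        show P ((w : H) + ((v : Mᗮ) : H)) = (v : Mᗮ)
        rw [map_add, hPM _ w.2, hPv, zero_add]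
      have eqv := LinearEquiv.ofBijective φ ⟨hφinj, hφsurj⟩
      rw [← eqv.finrank_eq]
      exact hk
  · -- density
    rw [← Submodule.dense_iff_topologicalClosure_eq_top]
    set K := ⨆ ω ∈ Metric.ball (0 : ℂ) 1, LinearMap.ker ((T - ω • (1 : H →L[ℂ] H)) : H →ₗ[ℂ] H) with hK
    have hKdense : Dense ((K : Set H)) := by
      rw [Submodule.dense_iff_topologicalClosure_eq_top]
      exact hT.2
    set K' := ⨆ ω ∈ Metric.ball (0 : ℂ) 1,
      LinearMap.ker ((A - ω • (1 : Mᗮ →L[ℂ] Mᗮ)) : Mᗮ →ₗ[ℂ] Mᗮ) with hK'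
    have hsub : ∀ x ∈ K, P x ∈ K' := by
      have hle : K ≤ Submodule.comap (P : H →ₗ[ℂ] Mᗮ) K' := by
        refine iSup₂_le fun ω hω y hy => ?_
        refine Submodule.mem_comap.mpr ?_
        exact (le_iSup₂ (f := fun ω (_ : ω ∈ Metric.ball (0 : ℂ) 1) =>
          LinearMap.ker ((A - ω • (1 : Mᗮ →L[ℂ] Mᗮ)) : Mᗮ →ₗ[ℂ] Mᗮ)) ω hω) (hmap ω y hy)
      exact fun x hx => hle hx
    rw [dense_iff_closure_eq]
    apply Set.eq_univ_of_forall
    intro y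
    have hy : ((y : Mᗮ) : H) ∈ closure (K : Set H) := hKdense _
    have h1 : P ((y : Mᗮ) : H) ∈ closure ((fun x => P x) '' (K : Set H)) :=
      image_closure_subset_closure_image P.continuous ⟨_, hy, rfl⟩
    have h2 : ((fun x => P x) '' (K : Set H)) ⊆ (K' : Set Mᗮ) := by
      rintro _ ⟨x, hx, rfl⟩
      exact hsub x hx
    have := closure_mono h2 h1
    rwa [hPv] at this
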